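/- Let P be a finite poset in which the longest chains have length r. Then the following are equivalent: (1) E(chain(k); ddeg) = E(uni; ddeg) for all k = 0,1,...,r; (2) E(mchain(m); ddeg) = E(uni; ddeg) for all m ≥ 0; (3) E(mchain(m); ddeg) = E(uni; ddeg) for all m = 0,1,...,r; (4) E(m̂chain(m); ddeg) = E(uni; ddeg) for all m ≥ 0; (5) E(m̂chain(m); ddeg) = E(uni; ddeg) for all m = 0,1,...,r. -/

import Mathlib

open scoped Classical

noncomputable section

namespace CDEPaper

/-- The down-degree of `p`: the number of elements that `p` covers, as a real number. -/
def ddeg {α : Type*} [PartialOrder α] (p : α) : ℝ :=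
  (Nat.card {q : α // q ⋖ p} : ℝ)

/-- The expectation of the statistic `f` with respect to the weights `μ`. -/
def expect {α : Type*} (μ : α → ℝ) (f : α → ℝ) : ℝ :=
  ∑ᶠ p, μ p * f p

/-- The uniform distribution on a finite type. -/
def uni (α : Type*) : α → ℝ :=
  fun _ => (Nat.card α : ℝ)⁻¹

/-- `μ` is a probability distribution. -/
def IsProbDist {α : Type*} (μ : α → ℝ) : Prop :=
  (∀ x, 0 ≤ μ x) ∧ (∑ᶠ x, μ x) = 1

/-- The `k`-chain distribution: each `p` gets probability proportional to the number of
`k`-chains (strictly increasing sequences `c₀ < c₁ < ⋯ < c_k`) passing through `p`. -/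
def chainDist (α : Type*) [PartialOrder α] (k : ℕ) : α → ℝ := fun p =>
  (Nat.card {c : Fin (k + 1) → α // StrictMono c ∧ ∃ i, c i = p} : ℝ) /
    (((k : ℝ) + 1) * (Nat.card {c : Fin (k + 1) → α // StrictMono c} : ℝ))

/-- The `m`-multichain distribution: each `p` gets probability proportional to the number of
`m`-multichains (weakly increasing sequences) passing through `p`. -/
def mchainDist (α : Type*) [PartialOrder α] (m : ℕ) : α → ℝ := fun p =>
  (Nat.card {c : Fin (m + 1) → α // Monotone c ∧ ∃ i, c i = p} : ℝ) /
    (Nat.card {cq : (Fin (m + 1) → α) × α // Monotone cq.1 ∧ ∃ i, cq.1 i = cq.2} : ℝ)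

/-- The modified `m`-multichain distribution: each `p` gets probability proportional to the
number of pairs `(c, i)` where `c` is an `m`-multichain and `c i = p`. -/
def mhatDist (α : Type*) [PartialOrder α] (m : ℕ) : α → ℝ := fun p =>
  (Nat.card {ci : (Fin (m + 1) → α) × Fin (m + 1) // Monotone ci.1 ∧ ci.1 ci.2 = p} : ℝ) /
    (((m : ℝ) + 1) * (Nat.card {c : Fin (m + 1) → α // Monotone c} : ℝ))

/-- The maximal chain distribution: each `p` gets probability proportional to the number of
maximal chains passing through `p`. -/
def maxchainDist (α : Type*) [PartialOrder α] : α → ℝ := fun p =>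
  (Nat.card {C : Set α // IsMaxChain (· ≤ ·) C ∧ p ∈ C} : ℝ) /
    (Nat.card {Cq : Set α × α // IsMaxChain (· ≤ ·) Cq.1 ∧ Cq.2 ∈ Cq.1} : ℝ)

/-- A poset has coincidental down-degree expectations (CDE). -/
def IsCDE (α : Type*) [PartialOrder α] : Prop :=
  expect (maxchainDist α) ddeg = expect (uni α) ddeg

/-- A poset is mCDE: the expected down-degree with respect to the `k`-chain distribution agrees
with the uniform expected down-degree for every `k = 0, 1, …, r` (i.e. every `k` for which a
`k`-chain exists). -/
def IsMCDE (α : Type*) [PartialOrder α] : Prop :=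
  ∀ k : ℕ, (∃ c : Fin (k + 1) → α, StrictMono c) →
    expect (chainDist α k) ddeg = expect (uni α) ddeg

/-- The distributive lattice `J(P)` of order ideals (lower sets) of a poset, ordered by
inclusion. -/
abbrev OIdeal (α : Type*) [PartialOrder α] : Type _ := {I : Set α // IsLowerSet I}

/-- The indicator statistic that `p` can be toggled into the order ideal `I`. -/
def Tplus {α : Type*} [PartialOrder α] (p : α) (I : OIdeal α) : ℝ :=
  if p ∉ I.1 ∧ IsLowerSet (I.1 ∪ {p}) then 1 else 0

/-- The indicator statistic that `p` can be toggled out of the order ideal `I`. -/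
def Tminus {α : Type*} [PartialOrder α] (p : α) (I : OIdeal α) : ℝ :=
  if p ∈ I.1 ∧ IsLowerSet (I.1 \ {p}) then 1 else 0

/-- A distribution on `J(P)` is toggle-symmetric if for every `p` the probability that `p` can
be toggled in equals the probability that `p` can be toggled out. -/
def ToggleSymmetric {α : Type*} [PartialOrder α] (μ : OIdeal α → ℝ) : Prop :=
  ∀ p : α, expect μ (Tplus p) = expect μ (Tminus p)

/-- `J(P)` is toggle-CDE (tCDE): every toggle-symmetric probability distribution has the same
expected down-degree as the uniform distribution. -/
def IsTCDE (α : Type*) [PartialOrder α] : Prop :=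
  ∀ μ : OIdeal α → ℝ, IsProbDist μ → ToggleSymmetric μ →
    expect μ ddeg = expect (uni (OIdeal α)) ddeg

end CDEPaper
namespace CDEPaper

/-! ### Skew shapes and shifted shapes -/

/-- The boxes of the skew shape `λ/ν` of height `a`, in matrix coordinates with 1-based rows
and columns: row `i` (for `1 ≤ i ≤ a`) consists of the boxes `[i,j]` with `ν i < j ≤ λ i`.
The poset structure is the one induced from the componentwise (product) order on `ℕ × ℕ`. -/
def skewCells (a : ℕ) (lam nu : ℕ → ℕ) : Set (ℕ × ℕ) :=
  {b | 1 ≤ b.1 ∧ b.1 ≤ a ∧ nu b.1 < b.2 ∧ b.2 ≤ lam b.1}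

/-- The boxes of the shifted Young diagram of a strict partition `λ` of length `l`:
the boxes `[i,j]` with `1 ≤ i ≤ l` and `i ≤ j ≤ λ i + i - 1`.  The poset structure is the one
induced from the componentwise (product) order on `ℕ × ℕ`. -/
def shiftCells (l : ℕ) (lam : ℕ → ℕ) : Set (ℕ × ℕ) :=
  {b | 1 ≤ b.1 ∧ b.1 ≤ l ∧ b.1 ≤ b.2 ∧ b.2 < lam b.1 + b.1}

/-- The shifted rook statistic `R^shift_{ij}` on order ideals of (the poset of) `S`. -/
def Rshift (S : Set (ℕ × ℕ)) (i j : ℕ) (I : OIdeal ↥S) : ℝ :=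
  (∑ᶠ (q : ↥S), if (q : ℕ × ℕ).1 ≤ i ∧ (q : ℕ × ℕ).2 ≤ j then Tplus q I else 0)
    + (∑ᶠ (q : ↥S), if i ≤ (q : ℕ × ℕ).1 ∧ j ≤ (q : ℕ × ℕ).2 then Tminus q I else 0)
    - (∑ᶠ (q : ↥S),
        if (q : ℕ × ℕ).1 < i ∧ (q : ℕ × ℕ).2 < j ∧ (q : ℕ × ℕ).1 < (q : ℕ × ℕ).2 then
          Tminus q I else 0)
    - (∑ᶠ (q : ↥S),
        if i < (q : ℕ × ℕ).1 ∧ j < (q : ℕ × ℕ).2 ∧ (q : ℕ × ℕ).1 < (q : ℕ × ℕ).2 then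
          Tplus q I else 0)

/-- The shifted diagram of `λ` (of length `l`) has an outward corner indexed by `i'`
(a north step followed by an east step on the southeast border, occurring at the lattice point
`(i', λ (i'+1) + i')`) if and only if `1 ≤ i' < l` and `λ i' ≥ λ (i'+1) + 2`. -/
def IsCorner (l : ℕ) (lam : ℕ → ℕ) (i' : ℕ) : Prop :=
  1 ≤ i' ∧ i' + 1 ≤ l ∧ lam (i' + 1) + 2 ≤ lam i'

/-- An order ideal `I ∈ J(P_λ^shift)` contains the outward corner indexed by `i'`
(i.e. the lattice path of `I` contains both steps of the corner):  equivalently, `I` contains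
both the last box `[i'+1, λ(i'+1)+i']` of row `i'+1` and the box `[i', λ(i'+1)+i'+1]`. -/
def ContainsCorner (l : ℕ) (lam : ℕ → ℕ) (I : OIdeal ↥(shiftCells l lam)) (i' : ℕ) : Prop :=
  (∃ q : ↥(shiftCells l lam), (q : ℕ × ℕ) = (i' + 1, lam (i' + 1) + i') ∧ q ∈ I.1) ∧
  (∃ q : ↥(shiftCells l lam), (q : ℕ × ℕ) = (i', lam (i' + 1) + i' + 1) ∧ q ∈ I.1)

/-- A (not necessarily strict) partition `ν` (with parts `ν 1 ≥ ν 2 ≥ ⋯`) which, viewed as a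
straight shape, is balanced with height and width both equal to `k`:  it has exactly `k`
nonzero parts, its first part is `k`, and every outward corner of its boundary path (which
occurs at the point `(i, ν (i+1))` whenever `ν i > ν (i+1)`) lies on the anti-diagonal
`i + j = k` of the `k × k` square. -/
def BalancedSquare (k : ℕ) (nu : ℕ → ℕ) : Prop :=
  (∀ i, 1 ≤ i → nu (i + 1) ≤ nu i) ∧
  (∀ i, 1 ≤ i → i ≤ k → 1 ≤ nu i) ∧
  (∀ i, k < i → nu i = 0) ∧
  nu 1 = k ∧
  (∀ i, 1 ≤ i → i + 1 ≤ k → nu (i + 1) < nu i → i + nu (i + 1) = k)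

/-- The poset `P_{a,1,1,d}`: a bottom chain `w₁ < ⋯ < w_a`, two incomparable elements `x, y`
covering `w_a`, and a top chain `z₁ < ⋯ < z_d` with `z₁` covering both `x` and `y`.
It is realized inside `ℕ × ℕ` (with the componentwise order) as
`w_i = (i,i)`, `x = (a+1, a)`, `y = (a, a+1)`, `z_j = (a+j, a+j)`. -/
def Pa11d (a d : ℕ) : Set (ℕ × ℕ) :=
  {p | (1 ≤ p.1 ∧ p.1 ≤ a ∧ p.2 = p.1) ∨ p = (a + 1, a) ∨ p = (a, a + 1) ∨
    (∃ j, 1 ≤ j ∧ j ≤ d ∧ p = (a + j, a + j))}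

/-! ### Shifted set-valued tableaux

Letters of the primed alphabet `1 < 1' < 2 < 2' < ⋯` are encoded as natural numbers:
the letter `m : ℕ` has value `m / 2 + 1` and is primed iff `m` is odd
(so `0 ↦ 1, 1 ↦ 1', 2 ↦ 2, 3 ↦ 2', …`); the order on letters is the usual order on `ℕ`. -/

/-- The value of a letter. -/
def letterVal (m : ℕ) : ℕ := m / 2 + 1

/-- `T` is a shifted set-valued tableau of shape given by the box set `S`:  each box gets a
finite nonempty set of letters, all entries of a box weakly precede all entries of any strictly
larger box, each unprimed letter appears at most once in each column, and each primed letter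
appears at most once in each row. -/
def IsSSVT (S : Set (ℕ × ℕ)) (T : ↥S → Finset ℕ) : Prop :=
  (∀ u, (T u).Nonempty) ∧
  (∀ u v : ↥S, u < v → ∀ x ∈ T u, ∀ y ∈ T v, x ≤ y) ∧
  (∀ u v : ↥S, u ≠ v → (u : ℕ × ℕ).2 = (v : ℕ × ℕ).2 →
    ∀ m : ℕ, m % 2 = 0 → ¬(m ∈ T u ∧ m ∈ T v)) ∧
  (∀ u v : ↥S, u ≠ v → (u : ℕ × ℕ).1 = (v : ℕ × ℕ).1 →
    ∀ m : ℕ, m % 2 = 1 → ¬(m ∈ T u ∧ m ∈ T v))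

/-- `T` is standard: distinct entry occurrences have distinct values, and the values used are
exactly `1, 2, …, N` where `N` is the total number of entries. -/
def IsStandardT (S : Set (ℕ × ℕ)) (T : ↥S → Finset ℕ) : Prop :=
  (∀ u v : ↥S, ∀ x ∈ T u, ∀ y ∈ T v, letterVal x = letterVal y → u = v ∧ x = y) ∧
  (∀ m : ℕ, 1 ≤ m → m ≤ ∑ᶠ (u : ↥S), (T u).card → ∃ u : ↥S, ∃ x ∈ T u, letterVal x = m)

/-- `T` is barely set-valued: exactly one box has two entries; all other boxes have one. -/
def IsBarelySetValued (S : Set (ℕ × ℕ)) (T : ↥S → Finset ℕ) : Prop :=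
  ∃ u₀ : ↥S, (T u₀).card = 2 ∧ ∀ u : ↥S, u ≠ u₀ → (T u).card = 1

/-- `T` is unprimed: no primed letters appear. -/
def IsUnprimed (S : Set (ℕ × ℕ)) (T : ↥S → Finset ℕ) : Prop :=
  ∀ u : ↥S, ∀ x ∈ T u, x % 2 = 0

/-- `g^λ`: the number of unprimed standard shifted tableaux of shape `λ`. -/
def gShift (l : ℕ) (lam : ℕ → ℕ) : ℕ :=
  Nat.card {T : ↥(shiftCells l lam) → Finset ℕ //
    IsSSVT (shiftCells l lam) T ∧ IsStandardT (shiftCells l lam) T ∧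
    (∀ u, (T u).card = 1) ∧ IsUnprimed (shiftCells l lam) T}

/-- The number of standard shifted barely set-valued tableaux of shape `λ`. -/
def numBarelySVT (l : ℕ) (lam : ℕ → ℕ) : ℕ :=
  Nat.card {T : ↥(shiftCells l lam) → Finset ℕ //
    IsSSVT (shiftCells l lam) T ∧ IsStandardT (shiftCells l lam) T ∧
    IsBarelySetValued (shiftCells l lam) T}

/-! ### Toggles, rowmotion, orbits -/

/-- The toggle `τ_p` on order ideals. -/
def toggle {α : Type*} [PartialOrder α] (p : α) (I : OIdeal α) : OIdeal α :=
  if h : p ∉ I.1 ∧ IsLowerSet (I.1 ∪ {p}) then ⟨I.1 ∪ {p}, h.2⟩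
  else if h' : p ∈ I.1 ∧ IsLowerSet (I.1 \ {p}) then ⟨I.1 \ {p}, h'.2⟩
  else I

/-- The composition of the toggles along a list, applied head first. -/
def applyToggles {α : Type*} [PartialOrder α] (L : List α) (I : OIdeal α) : OIdeal α :=
  L.foldl (fun J p => toggle p J) I

/-- The forward orbit of `x` under `Φ` (for invertible `Φ` on a finite set, the orbit). -/
def orbit {β : Type*} (Φ : β → β) (x : β) : Set β := {y | ∃ n : ℕ, Φ^[n] x = y}

/-- The probability distribution that is uniform on the orbit of `x` under `Φ` and zero
outside of it. -/
def orbitDist {β : Type*} (Φ : β → β) (x : β) : β → ℝ := fun y =>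
  if y ∈ orbit Φ x then (Nat.card ↥(orbit Φ x) : ℝ)⁻¹ else 0

/-- Rowmotion on order ideals: `I ↦ {x : x ≤ y for some minimal element y of P \ I}`. -/
def rowmotion {α : Type*} [PartialOrder α] (I : OIdeal α) : OIdeal α :=
  ⟨{x | ∃ y, (y ∉ I.1 ∧ ∀ z, z ∉ I.1 → z ≤ y → z = y) ∧ x ≤ y}, by
    intro a b hba ha
    obtain ⟨y, hy, hay⟩ := ha
    exact ⟨y, hy, le_trans hba hay⟩⟩

/-- The antichain cardinality statistic `I ↦ #max(I)`. -/
def antichainCard {α : Type*} [PartialOrder α] (I : OIdeal α) : ℝ :=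
  (Nat.card {p : α // p ∈ I.1 ∧ ∀ q, q ∈ I.1 → p ≤ q → p = q} : ℝ)

end CDEPaper

namespace CDEPaper
set_option maxHeartbeats 1000000
set_option linter.unusedSectionVars false

lemma nat_card_sigma {ι : Type*} [Fintype ι] (f : ι → Type*) [∀ i, Finite (f i)] :
    Nat.card (Σ i, f i) = ∑ i, Nat.card (f i) := by
  have : ∀ i, Fintype (f i) := fun i => Fintype.ofFinite (f i)
  classical
  rw [Nat.card_eq_fintype_card, Fintype.card_sigma]
  simp only [Nat.card_eq_fintype_card]

section FinHelp
variable {β : Type*} [Preorder β] {n : ℕ}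

lemma monotone_snoc (g : Fin n → β) (a : β) (hg : Monotone g) (ha : ∀ x, g x ≤ a) :
    Monotone (Fin.snoc g a) := by
  intro x y hxy
  rcases Fin.eq_castSucc_or_eq_last x with ⟨u, rfl⟩ | rfl
  · rcases Fin.eq_castSucc_or_eq_last y with ⟨v, rfl⟩ | rfl
    · simpa [Fin.snoc_castSucc] using hg (by simpa using hxy)
    · simpa [Fin.snoc_castSucc, Fin.snoc_last] using ha u
  · have : y = Fin.last n := le_antisymm (Fin.le_last y) hxy
    subst this
    simp

lemma strictMono_snoc (g : Fin n → β) (a : β) (hg : StrictMono g) (ha : ∀ x, g x < a) :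
    StrictMono (Fin.snoc g a) := by
  intro x y hxy
  rcases Fin.eq_castSucc_or_eq_last y with ⟨v, rfl⟩ | rfl
  · rcases Fin.eq_castSucc_or_eq_last x with ⟨u, rfl⟩ | rfl
    · simpa [Fin.snoc_castSucc] using hg (by simpa using hxy)
    · exact absurd (lt_of_lt_of_le hxy (Fin.le_last _)) (lt_irrefl _)
  · rcases Fin.eq_castSucc_or_eq_last x with ⟨u, rfl⟩ | rfl
    · simpa [Fin.snoc_castSucc, Fin.snoc_last] using ha u
    · exact absurd hxy (lt_irrefl _)

end FinHelp

section Fact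
variable {α : Type*} [PartialOrder α]

lemma exists_factor : ∀ (m : ℕ) (c : Fin (m+1) → α), Monotone c →
    ∃ (k : ℕ) (s : Fin (k+1) → α) (g : Fin (m+1) → Fin (k+1)),
      k ≤ m ∧ StrictMono s ∧ Monotone g ∧ Function.Surjective g ∧ c = s ∘ g := by
  intro m
  induction m with
  | zero =>
    intro c _
    refine ⟨0, c, id, le_refl _, ?_, monotone_id, Function.surjective_id, rfl⟩
    intro a b h
    exact absurd (@Subsingleton.elim _ Fin.subsingleton_one a b) h.ne
  | succ m ih =>
    intro c hc
    have hcast : Monotone (fun x : Fin (m+1) => c x.castSucc) := by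
      intro a b hab
      exact hc (by simpa using hab)
    obtain ⟨k, s, g, hk, hs, hg, hgs, hfac⟩ := ih _ hcast
    have hsle : ∀ j, s j ≤ c (Fin.castSucc (Fin.last m)) := by
      intro j
      obtain ⟨x, rfl⟩ := hgs j
      have : s (g x) = c x.castSucc := congrFun hfac.symm x
      rw [this]
      exact hc (by simp [Fin.le_iff_val_le_val, Fin.is_le])
    have hle : c (Fin.castSucc (Fin.last m)) ≤ c (Fin.last (m+1)) := by
      apply hc
      simp [Fin.le_iff_val_le_val, Fin.last]
    by_cases h : c (Fin.last (m+1)) = c (Fin.castSucc (Fin.last m))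
    · refine ⟨k, s, Fin.snoc g (g (Fin.last m)), le_trans hk (by omega), hs,
        monotone_snoc _ _ hg (fun x => hg (Fin.le_last x)), ?_, ?_⟩
      · intro j
        obtain ⟨x, rfl⟩ := hgs j
        exact ⟨x.castSucc, by simp⟩
      · funext x
        rcases Fin.eq_castSucc_or_eq_last x with ⟨u, rfl⟩ | rfl
        · simpa using congrFun hfac u
        · simp only [Function.comp, Fin.snoc_last]
          rw [h]
          exact congrFun hfac (Fin.last m)
    · have hlt : c (Fin.castSucc (Fin.last m)) < c (Fin.last (m+1)) :=
        lt_of_le_of_ne hle (fun he => h he.symm)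
      refine ⟨k+1, Fin.snoc s (c (Fin.last (m+1))),
        Fin.snoc (fun x => (g x).castSucc) (Fin.last (k+1)), by omega,
        strictMono_snoc _ _ hs (fun j => lt_of_le_of_lt (hsle j) hlt), ?_, ?_, ?_⟩
      · apply monotone_snoc
        · intro a b hab
          simpa using hg hab
        · intro x
          exact Fin.le_last _
      · intro j
        rcases Fin.eq_castSucc_or_eq_last j with ⟨v, rfl⟩ | rfl
        · obtain ⟨x, rfl⟩ := hgs v
          exact ⟨x.castSucc, by simp⟩
        · exact ⟨Fin.last (m+1), by simp⟩
      · funext x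
        rcases Fin.eq_castSucc_or_eq_last x with ⟨u, rfl⟩ | rfl
        · simp only [Function.comp, Fin.snoc_castSucc, Fin.snoc_last]
          exact congrFun hfac u
        · simp [Function.comp]

end Fact

section Rank
variable {m k : ℕ}

lemma surj_zero (g : Fin (m+1) → Fin (k+1)) (hg : Monotone g)
    (hs : Function.Surjective g) : g 0 = 0 := by
  obtain ⟨x, hx⟩ := hs 0
  exact le_antisymm (hx ▸ hg (Fin.zero_le x)) (Fin.zero_le _)

lemma nojump (g : Fin (m+1) → Fin (k+1)) (hg : Monotone g) (hs : Function.Surjective g)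
    (t : Fin m) : (g t.succ).val ≤ (g t.castSucc).val + 1 := by
  by_contra hcon
  push_neg at hcon
  have hv : (g t.castSucc).val + 1 < k + 1 := by
    have := (g t.succ).isLt
    omega
  obtain ⟨x, hx⟩ := hs ⟨(g t.castSucc).val + 1, hv⟩
  have hxv : (g x).val = (g t.castSucc).val + 1 := by rw [hx]
  rcases le_or_gt x t.castSucc with hle | hlt
  · have := hg hle
    rw [Fin.le_iff_val_le_val] at this
    omega
  · have : t.succ ≤ x := by
      rw [Fin.le_iff_val_le_val, Fin.val_succ]
      rw [Fin.lt_iff_val_lt_val, Fin.coe_castSucc] at hlt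
      omega
    have := hg this
    rw [Fin.le_iff_val_le_val] at this
    omega

lemma rank_formula (g : Fin (m+1) → Fin (k+1)) (hg : Monotone g)
    (hs : Function.Surjective g) (i : Fin (m+1)) :
    (g i).val = (Finset.univ.filter
      (fun t : Fin m => t.succ ≤ i ∧ g t.castSucc ≠ g t.succ)).card := by
  induction i using Fin.induction with
  | zero =>
    rw [surj_zero g hg hs]
    have : (Finset.univ.filter
        (fun t : Fin m => t.succ ≤ (0 : Fin (m+1)) ∧ g t.castSucc ≠ g t.succ)) = ∅ := by
      apply Finset.filter_false_of_mem
      intro t _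
      rintro ⟨h1, -⟩
      have := Fin.le_iff_val_le_val.mp h1
      simp [Fin.val_succ] at this
    rw [this, Finset.card_empty, Fin.val_zero]
  | succ i ih =>
    have hstep : (g i.succ).val ≤ (g i.castSucc).val + 1 := nojump g hg hs i
    have hmono : (g i.castSucc).val ≤ (g i.succ).val := by
      have := hg (Fin.castSucc_le_succ i)
      exact Fin.le_iff_val_le_val.mp this
    by_cases hne : g i.castSucc = g i.succ
    · have hset : (Finset.univ.filter
          (fun t : Fin m => t.succ ≤ i.succ ∧ g t.castSucc ≠ g t.succ)) =
          (Finset.univ.filter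
          (fun t : Fin m => t.succ ≤ i.castSucc ∧ g t.castSucc ≠ g t.succ)) := by
        apply Finset.filter_congr
        intro t _
        constructor
        · rintro ⟨h1, h2⟩
          refine ⟨?_, h2⟩
          rw [Fin.le_iff_val_le_val] at h1 ⊢
          simp only [Fin.val_succ, Fin.coe_castSucc] at *
          rcases Nat.lt_or_ge t.val i.val with h | h
          · omega
          · exfalso
            have : t = i := Fin.ext (by omega)
            subst this
            exact h2 hne
        · rintro ⟨h1, h2⟩
          refine ⟨?_, h2⟩
          rw [Fin.le_iff_val_le_val] at h1 ⊢
          simp only [Fin.val_succ, Fin.coe_castSucc] at *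
          omega
      rw [hset, ← ih, ← hne]
    · have hval : (g i.succ).val = (g i.castSucc).val + 1 := by
        have : g i.castSucc < g i.succ := lt_of_le_of_ne (hg (Fin.castSucc_le_succ i)) hne
        rw [Fin.lt_iff_val_lt_val] at this
        omega
      have hset : (Finset.univ.filter
          (fun t : Fin m => t.succ ≤ i.succ ∧ g t.castSucc ≠ g t.succ)) =
          insert i (Finset.univ.filter
          (fun t : Fin m => t.succ ≤ i.castSucc ∧ g t.castSucc ≠ g t.succ)) := by
        ext t
        simp only [Finset.mem_filter, Finset.mem_insert, Finset.mem_univ, true_and]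
        constructor
        · rintro ⟨h1, h2⟩
          rw [Fin.le_iff_val_le_val] at h1
          simp only [Fin.val_succ] at h1
          rcases Nat.lt_or_ge t.val i.val with h | h
          · exact Or.inr ⟨by rw [Fin.le_iff_val_le_val]; simpa using h, h2⟩
          · exact Or.inl (Fin.ext (by omega))
        · rintro (rfl | ⟨h1, h2⟩)
          · exact ⟨le_refl _, hne⟩
          · refine ⟨?_, h2⟩
            rw [Fin.le_iff_val_le_val] at h1 ⊢
            simp only [Fin.val_succ, Fin.coe_castSucc] at *
            omega
      rw [hset, Finset.card_insert_of_notMem, ← ih, hval]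
      simp only [Finset.mem_filter, Finset.mem_univ, true_and, not_and]
      intro h1
      rw [Fin.le_iff_val_le_val] at h1
      simp [Fin.val_succ] at h1

end Rank

section Uniq
variable {α : Type*} [PartialOrder α] {m k : ℕ}

lemma fac_unique (s₁ s₂ : Fin (k+1) → α) (g₁ g₂ : Fin (m+1) → Fin (k+1))
    (hs₁ : StrictMono s₁) (hs₂ : StrictMono s₂)
    (hg₁ : Monotone g₁) (hsur₁ : Function.Surjective g₁)
    (hg₂ : Monotone g₂) (hsur₂ : Function.Surjective g₂)
    (h : s₁ ∘ g₁ = s₂ ∘ g₂) : g₁ = g₂ ∧ s₁ = s₂ := by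
  have hcc : ∀ x, s₁ (g₁ x) = s₂ (g₂ x) := fun x => congrFun h x
  have key : ∀ t : Fin m, (g₁ t.castSucc ≠ g₁ t.succ ↔ g₂ t.castSucc ≠ g₂ t.succ) := by
    intro t
    constructor
    · intro hne heq2
      apply hne
      apply hs₁.injective
      rw [hcc, hcc, heq2]
    · intro hne heq1
      apply hne
      apply hs₂.injective
      rw [← hcc, ← hcc, heq1]
  have hg : g₁ = g₂ := by
    funext i
    apply Fin.ext
    rw [rank_formula g₁ hg₁ hsur₁ i, rank_formula g₂ hg₂ hsur₂ i]
    congr 1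
    apply Finset.filter_congr
    intro t _
    rw [key t]
  refine ⟨hg, ?_⟩
  funext j
  obtain ⟨x, rfl⟩ := hsur₁ j
  rw [hcc x, hg]

lemma fac_image_card (s : Fin (k+1) → α) (g : Fin (m+1) → Fin (k+1))
    (hs : StrictMono s) (hsur : Function.Surjective g) :
    (Finset.univ.image (s ∘ g)).card = k + 1 := by
  have h1 : Finset.univ.image (s ∘ g) = Finset.univ.image s := by
    rw [← Finset.image_image]
    congr 1
    exact Finset.image_univ_of_surjective hsur
  rw [h1, Finset.card_image_of_injective _ hs.injective, Finset.card_univ, Fintype.card_fin]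

end Uniq

section Defs
variable (α : Type*) [PartialOrder α]

def An (k : ℕ) (p : α) : ℕ := Nat.card {c : Fin (k + 1) → α // StrictMono c ∧ ∃ i, c i = p}
def Nn (k : ℕ) : ℕ := Nat.card {c : Fin (k + 1) → α // StrictMono c}
def Mn (m : ℕ) (p : α) : ℕ := Nat.card {c : Fin (m + 1) → α // Monotone c ∧ ∃ i, c i = p}
def Hn (m : ℕ) (p : α) : ℕ :=
  Nat.card {ci : (Fin (m + 1) → α) × Fin (m + 1) // Monotone ci.1 ∧ ci.1 ci.2 = p}
def Dn (m : ℕ) : ℕ :=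
  Nat.card {cq : (Fin (m + 1) → α) × α // Monotone cq.1 ∧ ∃ i, cq.1 i = cq.2}
def NMn (m : ℕ) : ℕ := Nat.card {c : Fin (m + 1) → α // Monotone c}
def Sg (m k : ℕ) : ℕ :=
  Nat.card {g : Fin (m+1) → Fin (k+1) // Monotone g ∧ Function.Surjective g}

end Defs

section CardA
variable (α : Type*) [PartialOrder α]

variable [Fintype α]

lemma M_eq (m : ℕ) (p : α) :
    Mn α m p = ∑ k ∈ Finset.range (m+1), Sg m k * An α k p := by
  classical
  set X := {c : Fin (m + 1) → α // Monotone c ∧ ∃ i, c i = p} with hX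
  have kbd : ∀ c : Fin (m+1) → α, (Finset.univ.image c).card - 1 < m + 1 := by
    intro c
    have h1 : (Finset.univ.image c).card ≤ m + 1 := by
      calc (Finset.univ.image c).card ≤ (Finset.univ : Finset (Fin (m+1))).card :=
        Finset.card_image_le
      _ = m + 1 := by rw [Finset.card_univ, Fintype.card_fin]
    omega
  set kfun : X → Fin (m+1) := fun x => ⟨(Finset.univ.image x.1).card - 1, kbd x.1⟩ with hkfun
  have h1 : Mn α m p = ∑ j : Fin (m+1), Nat.card {x : X // kfun x = j} := by
    show Nat.card X = _
    rw [← Nat.card_congr (Equiv.sigmaFiberEquiv kfun), nat_card_sigma]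
  rw [h1, ← Fin.sum_univ_eq_sum_range (fun k => Sg m k * An α k p) (m+1)]
  apply Finset.sum_congr rfl
  intro j _
  -- fiber card
  set Y := {s : Fin ((j : ℕ) + 1) → α // StrictMono s ∧ ∃ jj, s jj = p} ×
    {g : Fin (m+1) → Fin ((j : ℕ)+1) // Monotone g ∧ Function.Surjective g} with hY
  have hmono : ∀ y : Y, Monotone (y.1.1 ∘ y.2.1) := fun y =>
    y.1.2.1.monotone.comp y.2.2.1
  have hexi : ∀ y : Y, ∃ i, (y.1.1 ∘ y.2.1) i = p := by
    rintro ⟨⟨s, hs, jj, hjj⟩, ⟨g, hg, hgs⟩⟩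
    obtain ⟨i, hi⟩ := hgs jj
    exact ⟨i, by simp [Function.comp, hi, hjj]⟩
  have hfib : ∀ y : Y, kfun ⟨y.1.1 ∘ y.2.1, hmono y, hexi y⟩ = j := by
    intro y
    apply Fin.ext
    show (Finset.univ.image (y.1.1 ∘ y.2.1)).card - 1 = (j : ℕ)
    rw [fac_image_card y.1.1 y.2.1 y.1.2.1 y.2.2.2]
    omega
  set Φ : Y → {x : X // kfun x = j} := fun y => ⟨⟨y.1.1 ∘ y.2.1, hmono y, hexi y⟩, hfib y⟩
    with hΦ
  have hbij : Function.Bijective Φ := by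
    constructor
    · rintro ⟨⟨s₁, hs₁, he₁⟩, ⟨g₁, hg₁, hgs₁⟩⟩ ⟨⟨s₂, hs₂, he₂⟩, ⟨g₂, hg₂, hgs₂⟩⟩ h
      have hfun : s₁ ∘ g₁ = s₂ ∘ g₂ :=
        congrArg (fun z : {x : X // kfun x = j} => (z.1.1 : Fin (m+1) → α)) h
      obtain ⟨hgg, hss⟩ := fac_unique s₁ s₂ g₁ g₂ hs₁ hs₂ hg₁ hgs₁ hg₂ hgs₂ hfun
      subst hgg; subst hss
      rfl
    · rintro ⟨⟨c, hc, hex⟩, hfibx⟩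
      obtain ⟨k₀, s, g, hk₀, hs, hg, hgs, hfac⟩ := exists_factor m c hc
      have hcard : (Finset.univ.image c).card = k₀ + 1 := by
        rw [hfac]; exact fac_image_card s g hs hgs
      have hjv : k₀ = (j : ℕ) := by
        have := congrArg Fin.val hfibx
        simp only [hkfun] at this
        simp only [hcard] at this
        omega
      subst hjv
      obtain ⟨i, hi⟩ := hex
      refine ⟨⟨⟨s, hs, ⟨g i, ?_⟩⟩, ⟨g, hg, hgs⟩⟩, ?_⟩
      · rw [← hi, hfac]; rfl
      · apply Subtype.ext
        apply Subtype.ext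
        exact hfac.symm
  rw [← Nat.card_congr (Equiv.ofBijective Φ hbij)]
  show Nat.card Y = _
  rw [Nat.card_prod, mul_comm]
  rfl

end CardA

section CardH
variable {α : Type*} [PartialOrder α]

def firstOcc {N : ℕ} (c : Fin (N+1) → α) (p : α) : ℕ :=
  sInf {t : ℕ | ∃ h : t < N+1, c ⟨t, h⟩ = p}

lemma firstOcc_le {N : ℕ} {c : Fin (N+1) → α} {p : α} (t : Fin (N+1)) (ht : c t = p) :
    firstOcc c p ≤ t.val :=
  Nat.sInf_le ⟨t.isLt, by rw [Fin.eta]; exact ht⟩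

lemma firstOcc_lt {N : ℕ} (c : Fin (N+1) → α) (p : α) : firstOcc c p < N + 1 := by
  by_cases h : {t : ℕ | ∃ h : t < N+1, c ⟨t, h⟩ = p}.Nonempty
  · exact (Nat.sInf_mem h).1
  · rw [Set.not_nonempty_iff_eq_empty] at h
    rw [firstOcc, h]
    simp

lemma firstOcc_spec {N : ℕ} {c : Fin (N+1) → α} {p : α} (h : ∃ t, c t = p) :
    c ⟨firstOcc c p, firstOcc_lt c p⟩ = p := by
  obtain ⟨t, ht⟩ := h
  have hne : {t : ℕ | ∃ h : t < N+1, c ⟨t, h⟩ = p}.Nonempty :=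
    ⟨t.val, t.isLt, by rw [Fin.eta]; exact ht⟩
  obtain ⟨hlt, hc⟩ := Nat.sInf_mem hne
  exact hc

lemma firstOcc_min {N : ℕ} {c : Fin (N+1) → α} {p : α} (t : Fin (N+1))
    (h : t.val < firstOcc c p) : c t ≠ p := by
  intro he
  exact Nat.notMem_of_lt_sInf h ⟨t.isLt, by rw [Fin.eta]; exact he⟩

lemma firstOcc_eq {N : ℕ} {c : Fin (N+1) → α} {p : α} {j : ℕ} (hj : j < N+1)
    (hcj : c ⟨j, hj⟩ = p) (hmin : ∀ t : Fin (N+1), t.val < j → c t ≠ p) :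
    firstOcc c p = j := by
  refine le_antisymm (firstOcc_le ⟨j, hj⟩ hcj) ?_
  by_contra h
  push_neg at h
  exact hmin ⟨firstOcc c p, firstOcc_lt c p⟩ h (firstOcc_spec ⟨⟨j, hj⟩, hcj⟩)

lemma const_between {N : ℕ} {c : Fin (N+1) → α} {p : α} (hc : Monotone c)
    {a b t : Fin (N+1)} (ha : c a = p) (hb : c b = p) (hat : a ≤ t) (htb : t ≤ b) :
    c t = p :=
  le_antisymm (hb ▸ hc htb) (ha ▸ hc hat)

/-- Insertion: blow up a `q`-multichain into an `m`-multichain by repeating the first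
occurrence of `p`. -/
def insF {q m : ℕ} (hqm : q ≤ m) (p : α) (c' : Fin (q+1) → α) : Fin (m+1) → α :=
  fun t => c' ⟨if t.val < firstOcc c' p then t.val
    else if t.val ≤ firstOcc c' p + (m - q) then firstOcc c' p else t.val - (m - q), by
      have h1 := firstOcc_lt c' p
      have h2 := t.isLt
      split_ifs <;> omega⟩

/-- Deletion: shrink an `m`-multichain to a `q`-multichain by deleting `m - q` entries
after the first occurrence of `p`. -/
def delF {q m : ℕ} (hqm : q ≤ m) (p : α) (c : Fin (m+1) → α) : Fin (q+1) → α :=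
  fun t => c ⟨if t.val < firstOcc c p then t.val else t.val + (m - q), by
      have h1 := firstOcc_lt c p
      have h2 := t.isLt
      split_ifs <;> omega⟩

section InsDel
variable {q m : ℕ} (hqm : q ≤ m) (p : α)

lemma insF_mono (c' : Fin (q+1) → α) (hc' : Monotone c') : Monotone (insF hqm p c') := by
  intro a b hab
  apply hc'
  rw [Fin.le_iff_val_le_val] at hab ⊢
  simp only
  split_ifs <;> omega

lemma insF_of_lt (c' : Fin (q+1) → α) (t : Fin (m+1)) (h : t.val < firstOcc c' p) :
    insF hqm p c' t = c' ⟨t.val, by have := firstOcc_lt c' p; omega⟩ := by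
  simp only [insF, delF]
  apply congrArg
  apply Fin.ext
  simp only
  split_ifs <;> omega

lemma insF_of_mid (c' : Fin (q+1) → α) (t : Fin (m+1)) (h1 : firstOcc c' p ≤ t.val)
    (h2 : t.val ≤ firstOcc c' p + (m - q)) :
    insF hqm p c' t = c' ⟨firstOcc c' p, firstOcc_lt c' p⟩ := by
  simp only [insF, delF]
  apply congrArg
  apply Fin.ext
  simp only
  split_ifs <;> omega

lemma insF_of_gt (c' : Fin (q+1) → α) (t : Fin (m+1))
    (h : firstOcc c' p + (m - q) < t.val) :
    insF hqm p c' t = c' ⟨t.val - (m - q), by have := t.isLt; omega⟩ := by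
  simp only [insF, delF]
  apply congrArg
  apply Fin.ext
  simp only
  split_ifs <;> omega

lemma insF_firstOcc (c' : Fin (q+1) → α) (hex : ∃ t, c' t = p) :
    firstOcc (insF hqm p c') p = firstOcc c' p := by
  have hj := firstOcc_lt c' p
  apply firstOcc_eq (by omega : firstOcc c' p < m + 1)
  · rw [insF_of_mid hqm p c' _ (le_refl _) (Nat.le_add_right _ _)]
    exact firstOcc_spec hex
  · intro t ht
    rw [insF_of_lt hqm p c' t ht]
    exact firstOcc_min _ ht

lemma delF_mono (c : Fin (m+1) → α) (hc : Monotone c) : Monotone (delF hqm p c) := by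
  intro a b hab
  apply hc
  rw [Fin.le_iff_val_le_val] at hab ⊢
  simp only
  split_ifs <;> omega

lemma delF_of_lt (c : Fin (m+1) → α) (t : Fin (q+1)) (h : t.val < firstOcc c p) :
    delF hqm p c t = c ⟨t.val, by have := firstOcc_lt c p; omega⟩ := by
  simp only [insF, delF]
  apply congrArg
  apply Fin.ext
  simp only
  split_ifs <;> omega

lemma delF_of_ge (c : Fin (m+1) → α) (t : Fin (q+1)) (h : firstOcc c p ≤ t.val) :
    delF hqm p c t = c ⟨t.val + (m - q), by have := t.isLt; omega⟩ := by
  simp only [insF, delF]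
  apply congrArg
  apply Fin.ext
  simp only
  split_ifs <;> omega


lemma ins_marked (c' : Fin (q+1) → α) (hex : ∃ t, c' t = p)
    (h : firstOcc c' p + (m - q) < m + 1) :
    insF hqm p c' ⟨firstOcc c' p + (m - q), h⟩ = p := by
  rw [insF_of_mid hqm p c' _ (Nat.le_add_right _ _) (le_refl _)]
  exact firstOcc_spec hex

lemma del_ins (c' : Fin (q+1) → α) (hex : ∃ t, c' t = p) :
    delF hqm p (insF hqm p c') = c' := by
  funext t
  have hjq := firstOcc_lt c' p
  by_cases h1 : t.val < firstOcc c' p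
  · rw [delF_of_lt hqm p _ t (by rw [insF_firstOcc hqm p c' hex]; exact h1),
      insF_of_lt hqm p c' _ h1]
  · push_neg at h1
    rw [delF_of_ge hqm p _ t (by rw [insF_firstOcc hqm p c' hex]; exact h1)]
    rcases eq_or_lt_of_le h1 with heq | hlt
    · rw [insF_of_mid hqm p c' _ (by simp only [Fin.val_mk]; omega)
        (by simp only [Fin.val_mk]; omega)]
      exact congrArg c' (Fin.ext (by simp only [Fin.val_mk]; omega))
    · rw [insF_of_gt hqm p c' _ (by simp only [Fin.val_mk]; omega)]
      exact congrArg c' (Fin.ext (by simp only [Fin.val_mk]; have := t.isLt; omega))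

end InsDel

section DelSide
variable {q m : ℕ} (hqm : q ≤ m) (p : α) (c : Fin (m+1) → α) (i : Fin (m+1))

lemma delF_exists (hci : c i = p) (hd : i.val - firstOcc c p = m - q)
    (hjq : firstOcc c p < q + 1) :
    delF hqm p c ⟨firstOcc c p, hjq⟩ = p := by
  rw [delF_of_ge hqm p c _ (le_refl _)]
  have hji := firstOcc_le i hci
  have him := i.isLt
  exact Eq.trans (congrArg c (Fin.ext (by simp only [Fin.val_mk]; omega))) hci

lemma delF_firstOcc (hci : c i = p) (hd : i.val - firstOcc c p = m - q)
    (hjq : firstOcc c p < q + 1) :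
    firstOcc (delF hqm p c) p = firstOcc c p := by
  apply firstOcc_eq hjq (delF_exists hqm p c i hci hd hjq)
  intro t ht
  rw [delF_of_lt hqm p c t ht]
  exact firstOcc_min _ ht

lemma ins_del (hc : Monotone c) (hci : c i = p) (hd : i.val - firstOcc c p = m - q)
    (hjq : firstOcc c p < q + 1) :
    insF hqm p (delF hqm p c) = c := by
  funext t
  have hji := firstOcc_le i hci
  have him := i.isLt
  have htm := t.isLt
  have hfo := delF_firstOcc hqm p c i hci hd hjq
  by_cases h1 : t.val < firstOcc c p
  · rw [insF_of_lt hqm p _ t (by rw [hfo]; exact h1),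
      delF_of_lt hqm p c _ h1]
  · push_neg at h1
    by_cases h2 : t.val ≤ firstOcc c p + (m - q)
    · rw [insF_of_mid hqm p _ t (by rw [hfo]; exact h1) (by rw [hfo]; exact h2)]
      have hstep : delF hqm p c ⟨firstOcc (delF hqm p c) p, firstOcc_lt _ p⟩ = p := by
        have := delF_exists hqm p c i hci hd hjq
        convert this using 2
        exact Fin.ext (by simp only [Fin.val_mk]; rw [hfo])
      rw [hstep]
      have hcj : c ⟨firstOcc c p, by omega⟩ = p := firstOcc_spec ⟨i, hci⟩
      exact (const_between hc hcj hci
        (by rw [Fin.le_iff_val_le_val]; simpa using h1)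
        (by rw [Fin.le_iff_val_le_val]; omega)).symm
    · push_neg at h2
      rw [insF_of_gt hqm p _ t (by rw [hfo]; exact h2),
        delF_of_ge hqm p c _ (by simp only [Fin.val_mk]; omega)]
      exact congrArg c (Fin.ext (by simp only [Fin.val_mk]; omega))

lemma del_marked (hci : c i = p) (hd : i.val - firstOcc c p = m - q)
    (hjq : firstOcc c p < q + 1) :
    firstOcc (delF hqm p c) p + (m - q) = i.val := by
  rw [delF_firstOcc hqm p c i hci hd hjq]
  have hji := firstOcc_le i hci
  have him := i.isLt
  omega

end DelSide

lemma H_eq [Fintype α] (m : ℕ) (p : α) :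
    Hn α m p = ∑ m' ∈ Finset.range (m+1), Mn α m' p := by
  classical
  set X := {ci : (Fin (m + 1) → α) × Fin (m + 1) // Monotone ci.1 ∧ ci.1 ci.2 = p} with hX
  have ile : ∀ x : X, firstOcc x.1.1 p ≤ x.1.2.val := fun x => firstOcc_le x.1.2 x.2.2
  set fib : X → Fin (m+1) := fun x =>
    ⟨m - (x.1.2.val - firstOcc x.1.1 p), by omega⟩ with hfibdef
  have h1 : Hn α m p = ∑ j : Fin (m+1), Nat.card {x : X // fib x = j} := by
    show Nat.card X = _
    rw [← Nat.card_congr (Equiv.sigmaFiberEquiv fib), nat_card_sigma]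
  rw [h1, ← Fin.sum_univ_eq_sum_range (fun k => Mn α k p) (m+1)]
  apply Finset.sum_congr rfl
  intro q _
  have hqm : (q : ℕ) ≤ m := by omega
  set Y := {c' : Fin ((q : ℕ) + 1) → α // Monotone c' ∧ ∃ i, c' i = p} with hY
  have hmark : ∀ y : Y, firstOcc y.1 p + (m - (q:ℕ)) < m + 1 := by
    intro y; have := firstOcc_lt y.1 p; omega
  set Φ : Y → {x : X // fib x = q} := fun y =>
    ⟨⟨(insF hqm p y.1, ⟨firstOcc y.1 p + (m - (q:ℕ)), hmark y⟩),
      insF_mono hqm p y.1 y.2.1, ins_marked hqm p y.1 y.2.2 (hmark y)⟩, by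
      apply Fin.ext
      show m - ((firstOcc y.1 p + (m - (q:ℕ))) - firstOcc (insF hqm p y.1) p) = (q:ℕ)
      rw [insF_firstOcc hqm p y.1 y.2.2]
      have := firstOcc_lt y.1 p
      omega⟩ with hΦ
  have hbij : Function.Bijective Φ := by
    constructor
    · intro y₁ y₂ h
      have hfun : insF hqm p y₁.1 = insF hqm p y₂.1 :=
        congrArg (fun z : {x : X // fib x = q} => z.1.1.1) h
      apply Subtype.ext
      rw [← del_ins hqm p y₁.1 y₁.2.2, ← del_ins hqm p y₂.1 y₂.2.2, hfun]
    · rintro ⟨⟨⟨c, i⟩, hc, hci⟩, hfibx⟩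
      have hfib' : m - (i.val - firstOcc c p) = (q : ℕ) := congrArg Fin.val hfibx
      have hji : firstOcc c p ≤ i.val := firstOcc_le i hci
      have him := i.isLt
      have hd : i.val - firstOcc c p = m - (q:ℕ) := by omega
      have hjq : firstOcc c p < (q:ℕ) + 1 := by omega
      refine ⟨⟨delF hqm p c, delF_mono hqm p c hc,
        ⟨⟨firstOcc c p, hjq⟩, delF_exists hqm p c i hci hd hjq⟩⟩, ?_⟩
      apply Subtype.ext
      apply Subtype.ext
      exact Prod.ext (ins_del hqm p c i hc hci hd hjq)
        (Fin.ext (del_marked hqm p c i hci hd hjq))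
  rw [← Nat.card_congr (Equiv.ofBijective Φ hbij)]
  rfl

end CardH

section Simple
variable (α : Type*) [PartialOrder α] [Fintype α]

lemma sum_A (k : ℕ) : ∑ p : α, An α k p = (k + 1) * Nn α k := by
  classical
  set B : ({c : Fin (k+1) → α // StrictMono c} × Fin (k+1)) →
      (Σ p : α, {c : Fin (k + 1) → α // StrictMono c ∧ ∃ i, c i = p}) :=
    fun x => ⟨x.1.1 x.2, x.1.1, x.1.2, ⟨x.2, rfl⟩⟩ with hB
  have hbij : Function.Bijective B := by
    constructor
    · rintro ⟨⟨c, hc⟩, i⟩ ⟨⟨c', hc'⟩, i'⟩ h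
      have hfun : c = c' := congrArg (fun z => (z.2.1 : Fin (k+1) → α)) h
      subst hfun
      have hval : c i = c i' := congrArg (fun z => z.1) h
      have : i = i' := hc.injective hval
      subst this
      rfl
    · rintro ⟨p, c, hc, i, hi⟩
      subst hi
      exact ⟨(⟨c, hc⟩, i), rfl⟩
  have h1 : ∑ p : α, An α k p = Nat.card (Σ p : α,
      {c : Fin (k + 1) → α // StrictMono c ∧ ∃ i, c i = p}) := by
    rw [nat_card_sigma]
    rfl
  rw [h1, ← Nat.card_congr (Equiv.ofBijective B hbij), Nat.card_prod, Nat.card_eq_fintype_card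
    (α := Fin (k+1)), Fintype.card_fin, mul_comm]
  rfl

lemma sum_H (m : ℕ) : ∑ p : α, Hn α m p = (m + 1) * NMn α m := by
  classical
  set B : ({c : Fin (m+1) → α // Monotone c} × Fin (m+1)) →
      (Σ p : α, {ci : (Fin (m + 1) → α) × Fin (m + 1) // Monotone ci.1 ∧ ci.1 ci.2 = p}) :=
    fun x => ⟨x.1.1 x.2, (x.1.1, x.2), x.1.2, rfl⟩ with hB
  have hbij : Function.Bijective B := by
    constructor
    · rintro ⟨⟨c, hc⟩, i⟩ ⟨⟨c', hc'⟩, i'⟩ h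
      have hfun : (c, i) = (c', i') :=
        congrArg (fun z => (z.2.1 : (Fin (m+1) → α) × Fin (m+1))) h
      rw [Prod.mk.injEq] at hfun
      obtain ⟨h1, h2⟩ := hfun
      subst h1; subst h2
      rfl
    · rintro ⟨p, ⟨c, i⟩, hc, hci⟩
      subst hci
      exact ⟨(⟨c, hc⟩, i), rfl⟩
  have h1 : ∑ p : α, Hn α m p = Nat.card (Σ p : α,
      {ci : (Fin (m + 1) → α) × Fin (m + 1) // Monotone ci.1 ∧ ci.1 ci.2 = p}) := by
    rw [nat_card_sigma]
    rfl
  rw [h1, ← Nat.card_congr (Equiv.ofBijective B hbij), Nat.card_prod, Nat.card_eq_fintype_card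
    (α := Fin (m+1)), Fintype.card_fin, mul_comm]
  rfl

lemma sum_M (m : ℕ) : ∑ p : α, Mn α m p = Dn α m := by
  classical
  set B : (Σ p : α, {c : Fin (m + 1) → α // Monotone c ∧ ∃ i, c i = p}) →
      {cq : (Fin (m + 1) → α) × α // Monotone cq.1 ∧ ∃ i, cq.1 i = cq.2} :=
    fun x => ⟨(x.2.1, x.1), x.2.2.1, x.2.2.2⟩ with hB
  have hbij : Function.Bijective B := by
    constructor
    · rintro ⟨p, c, hc⟩ ⟨p', c', hc'⟩ h
      have hfun : ((c : Fin (m+1) → α), p) = (c', p') := congrArg (fun z => z.1) h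
      rw [Prod.mk.injEq] at hfun
      obtain ⟨h1, h2⟩ := hfun
      subst h2
      congr 1
      exact Subtype.ext h1
    · rintro ⟨⟨c, pq⟩, hmono, hex⟩
      exact ⟨⟨pq, c, hmono, hex⟩, rfl⟩
  have h1 : ∑ p : α, Mn α m p = Nat.card (Σ p : α,
      {c : Fin (m + 1) → α // Monotone c ∧ ∃ i, c i = p}) := by
    rw [nat_card_sigma]
    rfl
  rw [h1, Nat.card_congr (Equiv.ofBijective B hbij)]
  rfl

lemma Sg_self (m : ℕ) : Sg m m = 1 := by
  rw [Sg, Nat.card_eq_one_iff_unique]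
  constructor
  · constructor
    rintro ⟨g, hg, hs⟩ ⟨g', hg', hs'⟩
    have key : ∀ (f : Fin (m+1) → Fin (m+1)), Monotone f → Function.Surjective f →
        f = id := by
      intro f hf hsf
      have hinj : Function.Injective f := Finite.injective_iff_surjective.mpr hsf
      have hsm : StrictMono f := hf.strictMono_of_injective hinj
      have hle : ∀ i : Fin (m+1), i.val ≤ (f i).val := by
        intro i
        induction i using Fin.induction with
        | zero => exact Nat.zero_le _
        | succ i ih =>
          have := hsm (Fin.castSucc_lt_succ : i.castSucc < i.succ)
          rw [Fin.lt_iff_val_lt_val] at this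
          simp only [Fin.coe_castSucc] at ih
          simp only [Fin.val_succ]
          omega
      have hsum : ∑ i : Fin (m+1), (f i).val = ∑ i : Fin (m+1), i.val :=
        Function.Bijective.sum_comp ⟨hinj, hsf⟩ Fin.val
      have heq : ∀ i ∈ Finset.univ, i.val = (f i).val :=
        (Finset.sum_eq_sum_iff_of_le (fun i _ => hle i)).mp hsum.symm
      funext i
      exact (Fin.ext (heq i (Finset.mem_univ i))).symm
    exact Subtype.ext ((key g hg hs).trans (key g' hg' hs').symm)
  · exact ⟨id, monotone_id, Function.surjective_id⟩

variable {r : ℕ}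

lemma Nn_pos (hex : ∃ c : Fin (r + 1) → α, StrictMono c) (k : ℕ) (hk : k ≤ r) :
    0 < Nn α k := by
  obtain ⟨c, hc⟩ := hex
  rw [Nn, Nat.card_pos_iff]
  exact ⟨⟨⟨c ∘ Fin.castLE (by omega), hc.comp (Fin.strictMono_castLE _)⟩⟩, inferInstance⟩

lemma An_zero (hmax : ∀ c : Fin (r + 2) → α, ¬ StrictMono c) (k : ℕ) (hk : r < k)
    (p : α) : An α k p = 0 := by
  have : IsEmpty {c : Fin (k+1) → α // StrictMono c ∧ ∃ i, c i = p} := by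
    constructor
    rintro ⟨c, hc, -⟩
    exact hmax (c ∘ Fin.castLE (by omega)) (hc.comp (Fin.strictMono_castLE _))
  rw [An]
  exact Nat.card_of_isEmpty

lemma Nn_zero (hmax : ∀ c : Fin (r + 2) → α, ¬ StrictMono c) (k : ℕ) (hk : r < k) :
    Nn α k = 0 := by
  have : IsEmpty {c : Fin (k+1) → α // StrictMono c} := by
    constructor
    rintro ⟨c, hc⟩
    exact hmax (c ∘ Fin.castLE (by omega)) (hc.comp (Fin.strictMono_castLE _))
  rw [Nn]
  exact Nat.card_of_isEmpty

lemma Dn_pos [Nonempty α] (m : ℕ) : 0 < Dn α m := by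
  rw [Dn, Nat.card_pos_iff]
  obtain ⟨p⟩ := (inferInstance : Nonempty α)
  exact ⟨⟨⟨(fun _ => p, p), monotone_const, ⟨0, rfl⟩⟩⟩, inferInstance⟩

lemma NMn_pos [Nonempty α] (m : ℕ) : 0 < NMn α m := by
  rw [NMn, Nat.card_pos_iff]
  obtain ⟨p⟩ := (inferInstance : Nonempty α)
  exact ⟨⟨⟨fun _ => p, monotone_const⟩⟩, inferInstance⟩

end Simple

section Algebra
variable (α : Type*) [PartialOrder α] [Fintype α] (f : α → ℝ) (u : ℝ)

def Gr (k : ℕ) : ℝ := ∑ p : α, (An α k p : ℝ) * f p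
def DF (k : ℕ) : ℝ := Gr α f k - u * (((k : ℝ) + 1) * (Nn α k : ℝ))
def nuM (m : ℕ) : ℝ := ∑ p : α, (Mn α m p : ℝ) * f p
def D2 (m : ℕ) : ℝ := nuM α f m - u * (Dn α m : ℝ)

lemma Mn_cast (m : ℕ) (p : α) :
    (Mn α m p : ℝ) = ∑ k ∈ Finset.range (m+1), (Sg m k : ℝ) * (An α k p : ℝ) := by
  rw [M_eq α m p]
  push_cast
  rfl

lemma nuM_eq (m : ℕ) :
    nuM α f m = ∑ k ∈ Finset.range (m+1), (Sg m k : ℝ) * Gr α f k := by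
  rw [nuM]
  calc ∑ p : α, (Mn α m p : ℝ) * f p
      = ∑ p : α, ∑ k ∈ Finset.range (m+1), (Sg m k : ℝ) * (An α k p : ℝ) * f p := by
        apply Finset.sum_congr rfl
        intro p _
        rw [Mn_cast α m p, Finset.sum_mul]
    _ = ∑ k ∈ Finset.range (m+1), ∑ p : α, (Sg m k : ℝ) * (An α k p : ℝ) * f p :=
        Finset.sum_comm
    _ = ∑ k ∈ Finset.range (m+1), (Sg m k : ℝ) * Gr α f k := by
        apply Finset.sum_congr rfl
        intro k _
        rw [Gr, Finset.mul_sum]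
        apply Finset.sum_congr rfl
        intro p _
        ring

lemma Dn_cast (m : ℕ) :
    (Dn α m : ℝ) = ∑ k ∈ Finset.range (m+1), (Sg m k : ℝ) * (((k : ℝ) + 1) * (Nn α k : ℝ)) := by
  rw [← sum_M α m]
  push_cast
  calc ∑ p : α, (Mn α m p : ℝ)
      = ∑ p : α, ∑ k ∈ Finset.range (m+1), (Sg m k : ℝ) * (An α k p : ℝ) :=
        Finset.sum_congr rfl (fun p _ => Mn_cast α m p)
    _ = ∑ k ∈ Finset.range (m+1), (Sg m k : ℝ) * ∑ p : α, (An α k p : ℝ) := by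
        rw [Finset.sum_comm]
        exact Finset.sum_congr rfl (fun k _ => (Finset.mul_sum _ _ _).symm)
    _ = ∑ k ∈ Finset.range (m+1), (Sg m k : ℝ) * (((k : ℝ) + 1) * (Nn α k : ℝ)) := by
        apply Finset.sum_congr rfl
        intro k _
        congr 1
        have := sum_A α k
        have hc : (↑(∑ p : α, An α k p) : ℝ) = ((↑((k+1) * Nn α k)) : ℝ) := by
          exact_mod_cast congrArg (Nat.cast : ℕ → ℝ) this
        push_cast at hc
        rw [← hc]

lemma D2_eq (m : ℕ) :
    D2 α f u m = ∑ k ∈ Finset.range (m+1), (Sg m k : ℝ) * DF α f u k := by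
  rw [D2, nuM_eq, Dn_cast, Finset.mul_sum, ← Finset.sum_sub_distrib]
  apply Finset.sum_congr rfl
  intro k _
  rw [DF]
  ring

lemma DF_zero {r : ℕ} (hmax : ∀ c : Fin (r + 2) → α, ¬ StrictMono c) (k : ℕ) (hk : r < k) :
    DF α f u k = 0 := by
  rw [DF, Gr, Nn_zero α hmax k hk]
  have : ∀ p : α, (An α k p : ℝ) * f p = 0 := by
    intro p
    rw [An_zero α hmax k hk p]
    simp
  rw [Finset.sum_congr rfl (fun p _ => this p)]
  simp

lemma numH_eq (m : ℕ) :
    ∑ p : α, (Hn α m p : ℝ) * f p = ∑ m' ∈ Finset.range (m+1), nuM α f m' := by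
  calc ∑ p : α, (Hn α m p : ℝ) * f p
      = ∑ p : α, ∑ m' ∈ Finset.range (m+1), (Mn α m' p : ℝ) * f p := by
        apply Finset.sum_congr rfl
        intro p _
        rw [H_eq m p]
        push_cast
        rw [Finset.sum_mul]
    _ = ∑ m' ∈ Finset.range (m+1), ∑ p : α, (Mn α m' p : ℝ) * f p := Finset.sum_comm
    _ = _ := rfl

lemma denH_eq (m : ℕ) :
    ((m : ℝ) + 1) * (NMn α m : ℝ) = ∑ m' ∈ Finset.range (m+1), (Dn α m' : ℝ) := by
  have h1 : (m + 1) * NMn α m = ∑ m' ∈ Finset.range (m+1), Dn α m' := by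
    rw [← sum_H α m]
    calc ∑ p : α, Hn α m p
        = ∑ p : α, ∑ m' ∈ Finset.range (m+1), Mn α m' p :=
          Finset.sum_congr rfl (fun p _ => H_eq m p)
      _ = ∑ m' ∈ Finset.range (m+1), ∑ p : α, Mn α m' p := Finset.sum_comm
      _ = ∑ m' ∈ Finset.range (m+1), Dn α m' :=
          Finset.sum_congr rfl (fun m' _ => sum_M α m')
  have hc := congrArg (Nat.cast : ℕ → ℝ) h1
  push_cast at hc
  exact hc

end Algebra

end CDEPaper

namespace CDEPaper

/-- Proposition `prop:mcde`.  Let `P` be a finite poset in which the longest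
chains have length `r`.  Then the following are equivalent:
(1) `E(chain(k); ddeg) = E(uni; ddeg)` for all `k = 0, 1, …, r`;
(2) `E(mchain(m); ddeg) = E(uni; ddeg)` for all `m ≥ 0`;
(3) `E(mchain(m); ddeg) = E(uni; ddeg)` for all `m = 0, 1, …, r`;
(4) `E(m̂chain(m); ddeg) = E(uni; ddeg)` for all `m ≥ 0`;
(5) `E(m̂chain(m); ddeg) = E(uni; ddeg)` for all `m = 0, 1, …, r`. -/
theorem statement0 (α : Type*) [Finite α] [PartialOrder α] (r : ℕ)
    (hex : ∃ c : Fin (r + 1) → α, StrictMono c)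
    (hmax : ∀ c : Fin (r + 2) → α, ¬ StrictMono c) :
    List.TFAE
      [∀ k : ℕ, k ≤ r → expect (chainDist α k) ddeg = expect (uni α) ddeg,
       ∀ m : ℕ, expect (mchainDist α m) ddeg = expect (uni α) ddeg,
       ∀ m : ℕ, m ≤ r → expect (mchainDist α m) ddeg = expect (uni α) ddeg,
       ∀ m : ℕ, expect (mhatDist α m) ddeg = expect (uni α) ddeg,
       ∀ m : ℕ, m ≤ r → expect (mhatDist α m) ddeg = expect (uni α) ddeg] := by
  classical
  obtain ⟨inst⟩ := nonempty_fintype α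
  have hne : Nonempty α := ⟨hex.choose 0⟩
  set u := expect (uni α) ddeg with hu
  have hexpect : ∀ (μ g : α → ℝ), expect μ g = ∑ p : α, μ p * g p := fun μ g =>
    finsum_eq_sum_of_fintype _
  have hchain : ∀ k : ℕ, expect (chainDist α k) ddeg
      = Gr α ddeg k / (((k : ℝ) + 1) * (Nn α k : ℝ)) := by
    intro k
    rw [hexpect, Gr, Finset.sum_div]
    apply Finset.sum_congr rfl
    intro p _
    simp only [chainDist, An, Nn]
    exact div_mul_eq_mul_div _ _ _
  have hmch : ∀ m : ℕ, expect (mchainDist α m) ddeg = nuM α ddeg m / (Dn α m : ℝ) := by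
    intro m
    rw [hexpect, nuM, Finset.sum_div]
    apply Finset.sum_congr rfl
    intro p _
    simp only [mchainDist, Mn, Dn]
    exact div_mul_eq_mul_div _ _ _
  have hmhat : ∀ m : ℕ, expect (mhatDist α m) ddeg
      = (∑ p : α, (Hn α m p : ℝ) * ddeg p) / (((m : ℝ) + 1) * (NMn α m : ℝ)) := by
    intro m
    rw [hexpect, Finset.sum_div]
    apply Finset.sum_congr rfl
    intro p _
    simp only [mhatDist, Hn, NMn]
    exact div_mul_eq_mul_div _ _ _
  have hDnpos : ∀ m : ℕ, (0 : ℝ) < (Dn α m : ℝ) := fun m => by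
    exact_mod_cast Dn_pos α m
  have fact1 : ∀ k, k ≤ r → (expect (chainDist α k) ddeg = u ↔ DF α ddeg u k = 0) := by
    intro k hk
    rw [hchain k, DF]
    have hNn : (0 : ℝ) < (Nn α k : ℝ) := by exact_mod_cast Nn_pos α hex k hk
    have hpos : (0 : ℝ) < ((k : ℝ) + 1) * (Nn α k : ℝ) := by positivity
    rw [div_eq_iff hpos.ne', sub_eq_zero]
  have fact2 : ∀ m, (expect (mchainDist α m) ddeg = u ↔ D2 α ddeg u m = 0) := by
    intro m
    rw [hmch m, D2, div_eq_iff (hDnpos m).ne', sub_eq_zero]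
  have fact3 : ∀ m, (expect (mhatDist α m) ddeg = u ↔
      ∑ m' ∈ Finset.range (m+1), D2 α ddeg u m' = 0) := by
    intro m
    have hpos : (0 : ℝ) < ∑ m' ∈ Finset.range (m+1), (Dn α m' : ℝ) := by
      apply Finset.sum_pos (fun i _ => hDnpos i)
      exact ⟨0, Finset.mem_range.mpr (by omega)⟩
    have hsplit : ∑ m' ∈ Finset.range (m+1), D2 α ddeg u m'
        = (∑ m' ∈ Finset.range (m+1), nuM α ddeg m')
          - u * ∑ m' ∈ Finset.range (m+1), (Dn α m' : ℝ) := by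
      rw [Finset.mul_sum, ← Finset.sum_sub_distrib]
      exact Finset.sum_congr rfl (fun x _ => by rw [D2])
    rw [hmhat m, numH_eq α ddeg m, denH_eq α m, div_eq_iff hpos.ne', hsplit, sub_eq_zero]
  -- the implications
  tfae_have 1 → 2 := by
    intro h1 m
    rw [fact2 m, D2_eq]
    apply Finset.sum_eq_zero
    intro k _
    rcases le_or_gt k r with hkr | hkr
    · rw [(fact1 k hkr).mp (h1 k hkr), mul_zero]
    · rw [DF_zero α ddeg u hmax k hkr, mul_zero]
  tfae_have 2 → 3 := by
    intro h m _
    exact h m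
  tfae_have 3 → 1 := by
    intro h3
    have key : ∀ m, m ≤ r → DF α ddeg u m = 0 := by
      intro m
      induction m using Nat.strong_induction_on with
      | _ m ih =>
        intro hmr
        have h0 : D2 α ddeg u m = 0 := (fact2 m).mp (h3 m hmr)
        rw [D2_eq, Finset.sum_range_succ] at h0
        have hz : ∑ k ∈ Finset.range m, (Sg m k : ℝ) * DF α ddeg u k = 0 := by
          apply Finset.sum_eq_zero
          intro k hk
          have hkm : k < m := Finset.mem_range.mp hk
          rw [ih k hkm (by omega), mul_zero]
        rw [hz, zero_add, Sg_self m] at h0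
        simpa using h0
    intro k hk
    exact (fact1 k hk).mpr (key k hk)
  tfae_have 2 → 4 := by
    intro h2 m
    rw [fact3 m]
    apply Finset.sum_eq_zero
    intro m' _
    exact (fact2 m').mp (h2 m')
  tfae_have 4 → 5 := by
    intro h m _
    exact h m
  tfae_have 5 → 3 := by
    intro h5 m hmr
    rw [fact2 m]
    have hm := (fact3 m).mp (h5 m hmr)
    cases m with
    | zero => simpa using hm
    | succ m0 =>
      have hm0 := (fact3 m0).mp (h5 m0 (by omega))
      rw [Finset.sum_range_succ, hm0, zero_add] at hm
      exact hm
  tfae_finish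

end CDEPaper
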